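/- Let ι be a fixed-point-free involution of {1,…,2n} with ι ≠ J̄_n. Then there exists an index i with 1 ≤ i ≤ 2n−1 such that ι(i) > ι(i+1) and ι(i) ≠ i+1; moreover, for any such i, the conjugate ι' = s_i ∘ ι ∘ s_i (where s_i is the transposition exchanging i and i+1) is a fixed-point-free involution with l(ι') = l(ι) − 2. -/

import Mathlib

/-- A fixed-point-free involution. -/
def isFPF {m : ℕ} (ι : Equiv.Perm (Fin m)) : Prop :=
  ι * ι = 1 ∧ ∀ i, ι i ≠ i

/-- The length (number of inversions) of a permutation of `Fin m`. -/
def invLength {m : ℕ} (π : Equiv.Perm (Fin m)) : ℕ :=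
  Finset.card (Finset.univ.filter fun p : Fin m × Fin m => p.1 < p.2 ∧ π p.2 < π p.1)

/-- The fixed-point-free involution `J̄ₙ = 2143⋯(2n)(2n−1)`, in 0-based indexing:
it swaps `2k ↔ 2k+1`. -/
def Jbar (n : ℕ) : Equiv.Perm (Fin (2*n)) where
  toFun i := ⟨2*(i.val/2) + (1 - i.val % 2), by have := i.isLt; omega⟩
  invFun i := ⟨2*(i.val/2) + (1 - i.val % 2), by have := i.isLt; omega⟩
  left_inv i := by apply Fin.ext; simp only; omega
  right_inv i := by apply Fin.ext; simp only; omega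

lemma invLength_inv {m : ℕ} (π : Equiv.Perm (Fin m)) : invLength π⁻¹ = invLength π := by
  unfold invLength
  apply Finset.card_bij' (fun p _ => (π⁻¹ p.2, π⁻¹ p.1)) (fun q _ => (π q.2, π q.1))
  · intro p hp
    simp only [Finset.mem_filter, Finset.mem_univ, true_and] at hp ⊢
    exact ⟨hp.2, by simpa using hp.1⟩
  · intro q hq
    simp only [Finset.mem_filter, Finset.mem_univ, true_and] at hq ⊢
    exact ⟨hq.2, by simpa using hq.1⟩
  · intro p hp; simp
  · intro q hq; simp

lemma swap_lt_swap {m : ℕ} (i : Fin m) (h : i.val + 1 < m) {a b : Fin m}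
    (hab : a < b) (hne : ¬(a = i ∧ b = ⟨i.val+1, h⟩)) :
    Equiv.swap i ⟨i.val+1, h⟩ a < Equiv.swap i ⟨i.val+1, h⟩ b := by
  rw [Equiv.swap_apply_def, Equiv.swap_apply_def]
  simp only [Fin.ext_iff, Fin.lt_def] at *
  split_ifs <;> simp_all <;> omega

lemma lenA {m : ℕ} (π : Equiv.Perm (Fin m)) (i : Fin m) (h : i.val + 1 < m)
    (hd : π ⟨i.val+1, h⟩ < π i) :
    invLength (π * Equiv.swap i ⟨i.val+1, h⟩) + 1 = invLength π := by
  set s := Equiv.swap i ⟨i.val+1, h⟩ with hs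
  set P : Fin m × Fin m := (i, ⟨i.val+1, h⟩) with hP
  have hPmem : P ∈ Finset.univ.filter
      (fun p : Fin m × Fin m => p.1 < p.2 ∧ π p.2 < π p.1) := by
    simp only [Finset.mem_filter, Finset.mem_univ, true_and, hP]
    exact ⟨by simp [Fin.lt_def], hd⟩
  have hsi : s i = ⟨i.val+1, h⟩ := Equiv.swap_apply_left _ _
  have hsi1 : s ⟨i.val+1, h⟩ = i := Equiv.swap_apply_right _ _
  have hss : ∀ x, s (s x) = x := fun x => Equiv.swap_apply_self _ _ _
  have key : invLength (π * s) = ((Finset.univ.filter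
      fun p : Fin m × Fin m => p.1 < p.2 ∧ π p.2 < π p.1).erase P).card := by
    unfold invLength
    apply Finset.card_bij' (fun p _ => (s p.1, s p.2)) (fun q _ => (s q.1, s q.2))
    · intro p hp
      rw [Finset.mem_filter] at hp
      simp only [Finset.mem_filter, Finset.mem_univ, true_and,
        Equiv.Perm.mul_apply] at hp
      have hpP : ¬(p.1 = i ∧ p.2 = ⟨i.val+1, h⟩) := by
        rintro ⟨h1, h2⟩
        rw [h1, h2, hsi, hsi1] at hp
        exact absurd hp.2 (asymm hd)
      rw [Finset.mem_erase]
      refine ⟨?_, ?_⟩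
      · intro hEq
        have h1 : s p.1 = i := congrArg Prod.fst hEq
        have h2 : s p.2 = ⟨i.val+1, h⟩ := congrArg Prod.snd hEq
        have e1 : p.1 = ⟨i.val+1, h⟩ := by rw [← hss p.1, h1, hsi]
        have e2 : p.2 = i := by rw [← hss p.2, h2, hsi1]
        have hlt := hp.1
        rw [e1, e2, Fin.lt_def] at hlt
        simp at hlt
      · simp only [Finset.mem_filter, Finset.mem_univ, true_and]
        exact ⟨swap_lt_swap i h hp.1 hpP, hp.2⟩
    · intro q hq
      rw [Finset.mem_erase] at hq
      obtain ⟨hqP, hq⟩ := hq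
      simp only [Finset.mem_filter, Finset.mem_univ, true_and] at hq
      have hqP' : ¬(q.1 = i ∧ q.2 = ⟨i.val+1, h⟩) := by
        rintro ⟨h1, h2⟩
        exact hqP (by rw [hP, Prod.ext_iff]; exact ⟨h1, h2⟩)
      rw [Finset.mem_filter]
      simp only [Finset.mem_filter, Finset.mem_univ, true_and,
        Equiv.Perm.mul_apply, hss]
      exact ⟨swap_lt_swap i h hq.1 hqP', hq.2⟩
    · intro p hp; simp [hss]
    · intro q hq; simp [hss]
  rw [key]
  exact Finset.card_erase_add_one hPmem

lemma part2 {m : ℕ} (ι : Equiv.Perm (Fin m)) (hι : isFPF ι)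
    (i : Fin m) (h : i.val + 1 < m)
    (hd : ι ⟨i.val + 1, h⟩ < ι i) (hne : ι i ≠ ⟨i.val + 1, h⟩) :
    isFPF (Equiv.swap i ⟨i.val + 1, h⟩ * ι * Equiv.swap i ⟨i.val + 1, h⟩) ∧
    invLength (Equiv.swap i ⟨i.val + 1, h⟩ * ι * Equiv.swap i ⟨i.val + 1, h⟩) + 2
      = invLength ι := by
  set s := Equiv.swap i ⟨i.val+1, h⟩ with hs
  have hss : s * s = 1 := Equiv.swap_mul_self _ _
  have hiinv : ι⁻¹ = ι := by
    have := hι.1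
    exact inv_eq_of_mul_eq_one_left this
  constructor
  · constructor
    · calc (s * ι * s) * (s * ι * s) = s * (ι * (s * s) * ι) * s := by group
        _ = s * (ι * ι) * s := by rw [hss]; group
        _ = s * s := by rw [hι.1]; group
        _ = 1 := hss
    · intro x hx
      apply hι.2 (s x)
      have : s (ι (s x)) = x := hx
      have := congrArg s this
      rwa [Equiv.swap_apply_self] at this
  · have hii : ι i ≠ i := hι.2 i
    have hii1 : ι ⟨i.val+1, h⟩ ≠ ⟨i.val+1, h⟩ := hι.2 _
    have inv2 : ∀ x, ι (ι x) = x := fun x => by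
      have := congrArg (fun (f : Equiv.Perm (Fin m)) => f x) hι.1
      simpa using this
    have hι1i : ι ⟨i.val+1, h⟩ ≠ i := by
      intro hEq
      apply hne
      rw [← inv2 ⟨i.val+1, h⟩, hEq]
    have h1 := lenA ι i h hd
    -- σ = ι * s ; σ⁻¹ = s * ι
    have hσinv : (ι * s)⁻¹ = s * ι := by
      rw [mul_inv_rev, hiinv]
      congr 1
    have hfix1 : s (ι i) = ι i := Equiv.swap_apply_of_ne_of_ne hii hne
    have hfix2 : s (ι ⟨i.val+1, h⟩) = ι ⟨i.val+1, h⟩ :=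
      Equiv.swap_apply_of_ne_of_ne hι1i hii1
    have hd2 : (ι * s)⁻¹ ⟨i.val+1, h⟩ < (ι * s)⁻¹ i := by
      rw [hσinv]
      simpa [Equiv.Perm.mul_apply, hfix1, hfix2] using hd
    have h2 := lenA ((ι * s)⁻¹) i h hd2
    rw [invLength_inv] at h2
    rw [hσinv, mul_assoc] at h2
    rw [mul_assoc, ← h1, ← h2]

lemma Jbar_val {n : ℕ} (x : Fin (2*n)) :
    ((Jbar n) x).val = 2*(x.val/2) + (1 - x.val % 2) := rfl

lemma exists_descent {n : ℕ} (ι : Equiv.Perm (Fin (2*n))) (hι : isFPF ι)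
    (hne : ι ≠ Jbar n) :
    ∃ i : Fin (2*n), ∃ h : i.val + 1 < 2*n,
      ι ⟨i.val + 1, h⟩ < ι i ∧ ι i ≠ ⟨i.val + 1, h⟩ := by
  by_contra hcon
  push_neg at hcon
  apply hne
  have inv2 : ∀ x, ι (ι x) = x := fun x => by
    have := congrArg (fun (f : Equiv.Perm (Fin (2*n))) => f x) hι.1
    simpa using this
  have main : ∀ j : ℕ, ∀ hj : j < 2*n, (ι ⟨j, hj⟩).val = 2*(j/2) + (1 - j % 2) := by
    intro j
    induction j using Nat.strong_induction_on with
    | _ j IH =>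
      intro hj
      rcases Nat.even_or_odd j with hpar | hpar
      · -- j even: show ι j = j + 1
        obtain ⟨k, hk⟩ := hpar
        have hjmod : j % 2 = 0 := by omega
        rw [show 2*(j/2) + (1 - j % 2) = j + 1 by omega]
        obtain ⟨⟨m, hm2n⟩, hmdef⟩ : ∃ y, ι ⟨j, hj⟩ = y := ⟨_, rfl⟩
        rw [hmdef]
        simp only
        have hιm : ι ⟨m, hm2n⟩ = ⟨j, hj⟩ := by rw [← hmdef, inv2]
        have hmj : m ≠ j := fun hEq => hι.2 ⟨j, hj⟩ (by rw [hmdef]; exact Fin.ext hEq)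
        have hmge : j < m := by
          rcases Nat.lt_or_ge m j with hlt | hge
          · have hIH := IH m hlt hm2n
            rw [hιm] at hIH
            simp only at hIH
            omega
          · omega
        by_contra hne2
        have hmge2 : j + 2 ≤ m := by omega
        have hm1 : m - 1 < 2*n := by omega
        obtain ⟨⟨t, ht2n⟩, htdef⟩ : ∃ y, ι ⟨m-1, hm1⟩ = y := ⟨_, rfl⟩
        have hιt : ι ⟨t, ht2n⟩ = ⟨m-1, hm1⟩ := by rw [← htdef, inv2]
        have htj : t ≠ j := by
          intro hEq
          have h3 : ι ⟨t, ht2n⟩ = ι ⟨j, hj⟩ := congrArg ι (Fin.ext hEq)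
          rw [hιt, hmdef] at h3
          have h4 := congrArg Fin.val h3
          simp only at h4
          omega
        have htgt : j < t := by
          rcases Nat.lt_or_ge t j with hlt | hge
          · have hIH := IH t hlt ht2n
            rw [hιt] at hIH
            simp only at hIH
            omega
          · omega
        have hstep : (⟨m-1, hm1⟩ : Fin (2*n)).val + 1 < 2*n := by simp only; omega
        have hmk : (⟨(⟨m-1, hm1⟩ : Fin (2*n)).val + 1, hstep⟩ : Fin (2*n)) = ⟨m, hm2n⟩ :=
          Fin.ext (by simp only; omega)
        have hdesc : ι ⟨(⟨m-1, hm1⟩ : Fin (2*n)).val + 1, hstep⟩ < ι ⟨m-1, hm1⟩ := by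
          rw [hmk, hιm, htdef, Fin.lt_def]
          exact htgt
        have hc := hcon ⟨m-1, hm1⟩ hstep hdesc
        rw [htdef, hmk] at hc
        have h5 := congrArg Fin.val hc
        simp only at h5
        have h6 : ι ⟨t, ht2n⟩ = ι ⟨m, hm2n⟩ := congrArg ι (Fin.ext h5)
        rw [hιt, hιm] at h6
        have h7 := congrArg Fin.val h6
        simp only at h7
        omega
      · -- j odd: use IH at j-1
        obtain ⟨k, hk⟩ := hpar
        have hjmod : j % 2 = 1 := by omega
        have hj1 : j - 1 < 2*n := by omega
        have hprev := IH (j-1) (by omega) hj1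
        have hprevval : 2*((j-1)/2) + (1 - (j-1) % 2) = j := by omega
        rw [hprevval] at hprev
        have hιprev : ι ⟨j-1, hj1⟩ = ⟨j, hj⟩ := Fin.ext hprev
        have hfin : ι ⟨j, hj⟩ = ⟨j-1, hj1⟩ := by
          rw [← hιprev, inv2]
        rw [hfin]
        simp only
        omega
  ext x
  have hx := main x.val x.isLt
  rw [Fin.eta] at hx
  rw [Jbar_val]
  exact hx

/-- if `ι ≠ J̄ₙ` is a fixed-point-free involution then there is an index
`i` with `ι(i) > ι(i+1)` and `ι(i) ≠ i+1`; and for any such `i`, conjugating by the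
simple transposition `sᵢ` gives a fixed-point-free involution of length `l(ι) − 2`. -/
theorem conjugate_descent {n : ℕ} (ι : Equiv.Perm (Fin (2*n))) (hι : isFPF ι)
    (hne : ι ≠ Jbar n) :
    (∃ i : Fin (2*n), ∃ h : i.val + 1 < 2*n,
      ι ⟨i.val + 1, h⟩ < ι i ∧ ι i ≠ ⟨i.val + 1, h⟩) ∧
    (∀ i : Fin (2*n), ∀ h : i.val + 1 < 2*n,
      ι ⟨i.val + 1, h⟩ < ι i → ι i ≠ ⟨i.val + 1, h⟩ →
      isFPF (Equiv.swap i ⟨i.val + 1, h⟩ * ι * Equiv.swap i ⟨i.val + 1, h⟩) ∧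
      invLength (Equiv.swap i ⟨i.val + 1, h⟩ * ι * Equiv.swap i ⟨i.val + 1, h⟩) + 2
        = invLength ι) := by
  exact ⟨exists_descent ι hι hne, fun i h hd hne' => part2 ι hι i h hd hne'⟩
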